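/- Assume the standing setup. If there exists a holomorphic family of Riemann maps g_t for (U_t,c_t), then the motion φ_t is trivial: there is a holomorphic motion Φ_t of the closure U₀ ∪ ∂U₀ over 𝔻 such that Φ_t = φ_t on ∂U₀ and, for every t ∈ 𝔻, the restriction of Φ_t to U₀ is a holomorphic bijection onto U_t with Φ_t(c₀) = c_t. -/

import Mathlib

open Complex MeasureTheory Set Metric Filter Topology Bornology
open scoped Classical

noncomputable section

/-- The open unit disk `𝔻` in `ℂ`. -/
def unitDisk : Set ℂ := Metric.ball 0 1

/-- The unit circle `𝕋` in `ℂ`. -/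
def unitCircleSet : Set ℂ := Metric.sphere 0 1

/-- The exterior disk `Δ = {z : |z| > 1}`. -/
def extDisk : Set ℂ := {z : ℂ | 1 < ‖z‖}

/-- The normalized Lebesgue (Haar) probability measure `m` on the unit circle,
viewed as a measure on `ℂ` via the parametrization `x ↦ exp(2πix)` of `[0,1)`. -/
def circleMeasure : Measure ℂ :=
  Measure.map (fun x : ℝ => Complex.exp (2 * Real.pi * Complex.I * x))
    (MeasureTheory.volume.restrict (Set.Ioc (0:ℝ) 1))

/-- A pointed disk `(U,c)`: a nonempty bounded open simply connected subset of `ℂ`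
with a marked point `c ∈ U`. -/
def IsPointedDisk (U : Set ℂ) (c : ℂ) : Prop :=
  U.Nonempty ∧ Bornology.IsBounded U ∧ IsOpen U ∧ SimplyConnectedSpace U ∧ c ∈ U

/-- A Riemann map for the pointed disk `(U,c)`: a holomorphic bijection `𝔻 → U`
sending `0` to `c`. -/
def IsRiemannMap (U : Set ℂ) (c : ℂ) (g : ℂ → ℂ) : Prop :=
  DifferentiableOn ℂ g unitDisk ∧ Set.BijOn g unitDisk U ∧ g 0 = c

/-- The radial limit of `g` at the angle `a` exists and equals `p`
(limit as `r → 1⁻` of `g(ra)`). -/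
def RadialLimitAt (g : ℂ → ℂ) (a p : ℂ) : Prop :=
  Filter.Tendsto (fun r : ℝ => g ((r : ℂ) * a)) (nhdsWithin 1 (Set.Iio 1)) (nhds p)

/-- The exterior radial limit of `g` at the angle `a` exists and equals `p`
(limit as `r → 1⁺` of `g(ra)`). -/
def ExtRadialLimitAt (g : ℂ → ℂ) (a p : ℂ) : Prop :=
  Filter.Tendsto (fun r : ℝ => g ((r : ℂ) * a)) (nhdsWithin 1 (Set.Ioi 1)) (nhds p)

/-- The set `g⁻¹(p)` of landing angles of `g` whose radial limit is `p`. -/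
def anglesLandingAt (g : ℂ → ℂ) (p : ℂ) : Set ℂ :=
  {a ∈ unitCircleSet | RadialLimitAt g a p}

/-- `p` is uniaccessible: exactly one angle lands at `p`. -/
def Uniaccessible (g : ℂ → ℂ) (p : ℂ) : Prop :=
  ∃ a, anglesLandingAt g p = {a}

/-- `p` is biaccessible: exactly two angles land at `p`. -/
def Biaccessible (g : ℂ → ℂ) (p : ℂ) : Prop :=
  ∃ a b, a ≠ b ∧ anglesLandingAt g p = {a, b}

/-- `φ : ∂U → ∂V` is conformally fit relative to the centers `c, c'`. -/
def ConformallyFit (U : Set ℂ) (c : ℂ) (V : Set ℂ) (c' : ℂ) (φ : ℂ → ℂ) : Prop :=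
  ∃ g g', IsRiemannMap U c g ∧ IsRiemannMap V c' g' ∧
    ∀ a ∈ unitCircleSet, ∀ p, RadialLimitAt g a p → RadialLimitAt g' a (φ p)

/-- `φ` restricts to a homeomorphism from `S` onto `T`. -/
def IsHomeoOn (φ : ℂ → ℂ) (S T : Set ℂ) : Prop :=
  ContinuousOn φ S ∧ Set.BijOn φ S T ∧
    ∃ ψ : ℂ → ℂ, ContinuousOn ψ T ∧ Set.InvOn ψ φ S T

/-- `ρ` is the intrinsic rotation of `(U,c)` by angle `θ`. -/
def IsIntrinsicRotation (U : Set ℂ) (c : ℂ) (θ : ℝ) (ρ : ℂ → ℂ) : Prop :=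
  ∃ g, IsRiemannMap U c g ∧
    ∀ z ∈ unitDisk, ρ (g z) = g (Complex.exp (2 * Real.pi * Complex.I * θ) * z)

/-- `σ` is an orientation-preserving homeomorphism of the unit circle: it is a
homeomorphism of `𝕋` having a continuous strictly increasing lift `τ` with
`τ(x+1) = τ(x)+1`. -/
def IsOrientationPreservingCircleHomeo (σ : ℂ → ℂ) : Prop :=
  IsHomeoOn σ unitCircleSet unitCircleSet ∧
  ∃ τ : ℝ → ℝ, Continuous τ ∧ StrictMono τ ∧ (∀ x, τ (x + 1) = τ x + 1) ∧
    ∀ x : ℝ, σ (Complex.exp (2 * Real.pi * Complex.I * x)) =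
      Complex.exp (2 * Real.pi * Complex.I * τ x)

/-- The closed counterclockwise arc of the unit circle from `a` to `b`
does not contain `1`. -/
def ArcAvoidsOne (a b : ℂ) : Prop :=
  ∃ x y : ℝ, 0 < x ∧ x ≤ y ∧ y < 1 ∧
    a = Complex.exp (2 * Real.pi * Complex.I * x) ∧
    b = Complex.exp (2 * Real.pi * Complex.I * y)

/-- The set `A¹` of angles landing at uniaccessible points. -/
def uniAngles (g : ℂ → ℂ) : Set ℂ :=
  {a ∈ unitCircleSet | ∃ p, RadialLimitAt g a p ∧ Uniaccessible g p}

/-- The set `A²⁻` of minus-labeled angles landing at biaccessible points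
(relative to the marked angle `1`). -/
def minusAngles (g : ℂ → ℂ) : Set ℂ :=
  {a | ∃ p b, a ≠ b ∧ anglesLandingAt g p = {a, b} ∧ ArcAvoidsOne a b}

/-- The set `A²⁺` of plus-labeled angles landing at biaccessible points
(relative to the marked angle `1`). -/
def plusAngles (g : ℂ → ℂ) : Set ℂ :=
  {b | ∃ p a, a ≠ b ∧ anglesLandingAt g p = {a, b} ∧ ArcAvoidsOne a b}

/-- The measure `α` associated to `(U,c,s,g)`. -/
def alphaMeasure (g : ℂ → ℂ) (X : Set ℂ) : ENNReal :=
  circleMeasure {a ∈ uniAngles g | ∃ p ∈ X, RadialLimitAt g a p}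

/-- The measure `β⁻` associated to `(U,c,s,g)`. -/
def betaMinusMeasure (g : ℂ → ℂ) (X : Set ℂ) : ENNReal :=
  circleMeasure {a ∈ minusAngles g | ∃ p ∈ X, RadialLimitAt g a p}

/-- The measure `β⁺` associated to `(U,c,s,g)`. -/
def betaPlusMeasure (g : ℂ → ℂ) (X : Set ℂ) : ENNReal :=
  circleMeasure {a ∈ plusAngles g | ∃ p ∈ X, RadialLimitAt g a p}

/-- The harmonic measure of a pointed disk, computed from a Riemann map `g`:
`ω(X) = m {a ∈ 𝕋 : g(a) exists and g(a) ∈ X}`. -/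
def harmonicMeasureVia (g : ℂ → ℂ) (X : Set ℂ) : ENNReal :=
  circleMeasure {a ∈ unitCircleSet | ∃ p ∈ X, RadialLimitAt g a p}

/-- An exterior Riemann map for the unbounded domain `U`: an injective holomorphic
map on `Δ` with image `U` and `|g(z)| → ∞` as `|z| → ∞`. -/
def IsExtRiemannMap (U : Set ℂ) (g : ℂ → ℂ) : Prop :=
  DifferentiableOn ℂ g extDisk ∧ Set.InjOn g extDisk ∧ g '' extDisk = U ∧
    Filter.Tendsto (fun z => ‖g z‖) (Filter.comap (fun z : ℂ => ‖z‖) Filter.atTop)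
      Filter.atTop

/-- The set of exterior landing angles of `g` with radial limit `p`. -/
def extAnglesLandingAt (g : ℂ → ℂ) (p : ℂ) : Set ℂ :=
  {a ∈ unitCircleSet | ExtRadialLimitAt g a p}

/-- `p` is uniaccessible for the exterior map `g`. -/
def ExtUniaccessible (g : ℂ → ℂ) (p : ℂ) : Prop :=
  ∃ a, extAnglesLandingAt g p = {a}

/-- `p` is biaccessible for the exterior map `g`. -/
def ExtBiaccessible (g : ℂ → ℂ) (p : ℂ) : Prop :=
  ∃ a b, a ≠ b ∧ extAnglesLandingAt g p = {a, b}

/-- The Zhukovskii map `Z(ζ) = ζ + 1/ζ`. -/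
def zhukovskii (z : ℂ) : ℂ := z + z⁻¹

/-- The exterior ray `γ_g(a) = {g(ra) : r > 1}`. -/
def extRay (g : ℂ → ℂ) (a : ℂ) : Set ℂ :=
  {w | ∃ r : ℝ, 1 < r ∧ w = g ((r : ℂ) * a)}

/-- A family of maps `f_t : U_t → ℂ` depends holomorphically on `t ∈ 𝔻`. -/
def DependsHolomorphicallyOn (U : ℂ → Set ℂ) (f : ℂ → ℂ → ℂ) : Prop :=
  ∀ t₀ ∈ unitDisk, ∀ z₀ ∈ U t₀, ∃ N : Set ℂ, N ⊆ unitDisk ∧ IsOpen N ∧ t₀ ∈ N ∧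
    (∀ t ∈ N, z₀ ∈ U t) ∧ DifferentiableOn ℂ (fun t => f t z₀) N

/-- A holomorphic motion of `X` over `𝔻`. -/
def IsHolomorphicMotion (X : Set ℂ) (φ : ℂ → ℂ → ℂ) : Prop :=
  (∀ t ∈ unitDisk, Set.InjOn (φ t) X) ∧
  (∀ z ∈ X, DifferentiableOn ℂ (fun t => φ t z) unitDisk) ∧
  ∀ z ∈ X, φ 0 z = z

/-- The standing setup: a family of pointed disks `(U_t, c_t)` over `𝔻` with
holomorphically varying centers, whose boundaries undergo the holomorphic motion
`φ_t`. -/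
def StandingSetup (U : ℂ → Set ℂ) (c : ℂ → ℂ) (φ : ℂ → ℂ → ℂ) : Prop :=
  (∀ t ∈ unitDisk, IsPointedDisk (U t) (c t)) ∧
  DifferentiableOn ℂ c unitDisk ∧
  IsHolomorphicMotion (frontier (U 0)) φ ∧
  ∀ t ∈ unitDisk, φ t '' frontier (U 0) = frontier (U t)

/-- A holomorphic family of Riemann maps for the family `(U_t, c_t)`. -/
def IsHolomorphicFamilyOfRiemannMaps (U : ℂ → Set ℂ) (c : ℂ → ℂ) (g : ℂ → ℂ → ℂ) : Prop :=
  (∀ t ∈ unitDisk, IsRiemannMap (U t) (c t) (g t)) ∧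
  ∀ z ∈ unitDisk, DifferentiableOn ℂ (fun t => g t z) unitDisk

/-- The motion `φ_t` is trivial: it extends to a holomorphic motion of the closure
of `U₀` which restricts to a biholomorphism `U₀ → U_t` sending `c₀` to `c_t`. -/
def IsTrivialMotion (U : ℂ → Set ℂ) (c : ℂ → ℂ) (φ : ℂ → ℂ → ℂ) : Prop :=
  ∃ Φ : ℂ → ℂ → ℂ, IsHolomorphicMotion (closure (U 0)) Φ ∧
    (∀ t ∈ unitDisk, ∀ z ∈ frontier (U 0), Φ t z = φ t z) ∧
    ∀ t ∈ unitDisk,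
      DifferentiableOn ℂ (Φ t) (U 0) ∧ Set.BijOn (Φ t) (U 0) (U t) ∧ Φ t (c 0) = c t

/-- The conformal radius `rad(U,c) = |g'(0)|` for a Riemann map `g` of `(U,c)`. -/
def conformalRadius (U : Set ℂ) (c : ℂ) : ℝ :=
  if h : ∃ g, IsRiemannMap U c g then ‖deriv h.choose 0‖ else 0

/-- A function on the unit disk is harmonic: locally the real part of a
holomorphic function. -/
def HarmonicOnDisk (u : ℂ → ℝ) : Prop :=
  ∀ t₀ ∈ unitDisk, ∃ N : Set ℂ, N ⊆ unitDisk ∧ IsOpen N ∧ t₀ ∈ N ∧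
    ∃ F : ℂ → ℂ, DifferentiableOn ℂ F N ∧ ∀ t ∈ N, (F t).re = u t


open Filter in
/-- Continuity of a right inverse of an injective holomorphic map. -/
lemma invOn_continuousAt_aux {s u : Set ℂ} (hs : IsOpen s) (hu : IsOpen u) {f h : ℂ → ℂ}
    (hfa : AnalyticOnNhd ℂ f s) (hinj : Set.InjOn f s)
    (hh : ∀ z ∈ u, h z ∈ s ∧ f (h z) = z) {z₀ : ℂ} (hz₀ : z₀ ∈ u) :
    ContinuousAt h z₀ := by
  obtain ⟨hw₀s, hfw₀⟩ := hh z₀ hz₀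
  rcases (hfa _ hw₀s).eventually_constant_or_nhds_le_map_nhds with hconst | hle
  · exfalso
    have h1 : ∀ᶠ w in 𝓝[≠] (h z₀), (f w = f (h z₀) ∧ w ∈ s) ∧ w ≠ h z₀ :=
      ((hconst.and (hs.eventually_mem hw₀s)).filter_mono nhdsWithin_le_nhds).and
        (eventually_mem_nhdsWithin.mono fun w hw => hw)
    obtain ⟨w, ⟨hfw, hws⟩, hwne⟩ := h1.exists
    exact hwne (hinj hws hw₀s hfw)
  · rw [ContinuousAt, Filter.tendsto_def]
    intro W hW
    obtain ⟨W', hW'sub, hW'open, hW'mem⟩ := _root_.mem_nhds_iff.1 hW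
    have hVmem : f '' (W' ∩ s) ∈ map f (𝓝 (h z₀)) := by
      refine mem_map.2 (Filter.mem_of_superset ?_ (Set.subset_preimage_image _ _))
      exact Filter.inter_mem (hW'open.mem_nhds hW'mem) (hs.mem_nhds hw₀s)
    have hVnhds : f '' (W' ∩ s) ∈ 𝓝 z₀ := by
      have := hle hVmem
      rwa [hfw₀] at this
    refine Filter.mem_of_superset (Filter.inter_mem hVnhds (hu.mem_nhds hz₀)) ?_
    rintro z ⟨⟨w, ⟨hwW', hws⟩, hfw⟩, hzu⟩
    obtain ⟨hhzs, hfhz⟩ := hh z hzu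
    have : h z = w := hinj hhzs hws (by rw [hfhz, hfw])
    exact hW'sub (this ▸ hwW')

open Filter in
/-- Holomorphy of a right inverse of an injective holomorphic map. -/
lemma invOn_differentiableOn_aux {s u : Set ℂ} (hs : IsOpen s) (hu : IsOpen u) {f h : ℂ → ℂ}
    (hf : DifferentiableOn ℂ f s) (hinj : Set.InjOn f s)
    (hh : ∀ z ∈ u, h z ∈ s ∧ f (h z) = z) :
    DifferentiableOn ℂ h u := by
  have hfa : AnalyticOnNhd ℂ f s := hf.analyticOnNhd hs
  have hcont : ∀ z ∈ u, ContinuousAt h z := fun z hz =>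
    invOn_continuousAt_aux hs hu hfa hinj hh hz
  have hev : ∀ z ∈ u, ∀ᶠ y in 𝓝 z, f (h y) = y := fun z hz =>
    Filter.eventually_of_mem (hu.mem_nhds hz) fun y hy => (hh y hy).2
  have hdiff : ∀ z ∈ u, deriv f (h z) ≠ 0 → DifferentiableAt ℂ h z := by
    intro z hz hne
    have hcd : ContDiffAt ℂ 1 f (h z) :=
      (hf.contDiffOn hs).contDiffAt (hs.mem_nhds (hh z hz).1)
    exact HasStrictFDerivAt.differentiableAt ((hcd.hasStrictDerivAt one_ne_zero).of_local_left_inverse (hcont z hz) hne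
      (hev z hz))
  intro z₀ hz₀
  obtain ⟨hw₀s, hfw₀⟩ := hh z₀ hz₀
  rcases ((hfa.deriv) _ hw₀s).eventually_eq_zero_or_eventually_ne_zero with hzero | hne
  · exfalso
    obtain ⟨r, hr, hball⟩ := Metric.eventually_nhds_iff_ball.1
      (hzero.and (hs.eventually_mem hw₀s))
    have hconst : ∀ w ∈ Metric.ball (h z₀) r, f w = f (h z₀) := by
      intro w hw
      refine (convex_ball (h z₀) r).is_const_of_fderivWithin_eq_zero
        (hf.mono fun x hx => (hball x hx).2) ?_ hw (Metric.mem_ball_self hr)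
      intro x hx
      rw [fderivWithin_of_isOpen Metric.isOpen_ball hx, ← toSpanSingleton_deriv, (hball x hx).1]
      ext
      simp
    set w₁ : ℂ := h z₀ + r / 2 with hw₁
    have hw₁mem : w₁ ∈ Metric.ball (h z₀) r := by
      simp only [hw₁, Metric.mem_ball, dist_eq_norm, add_sub_cancel_left]
      simp [abs_of_pos hr]
      linarith
    have : w₁ = h z₀ := hinj (hball _ hw₁mem).2 hw₀s (hconst _ hw₁mem)
    have hr2 : (r : ℂ) / 2 ≠ 0 := by
      simp only [div_ne_zero_iff]
      exact ⟨Complex.ofReal_ne_zero.2 hr.ne', two_ne_zero⟩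
    exact hr2 (by linear_combination this - hw₁)
  · have hne' : ∀ᶠ w in 𝓝 (h z₀), w ≠ h z₀ → deriv f w ≠ 0 :=
      eventually_nhdsWithin_iff.mp hne
    obtain ⟨r, hr, hball⟩ := Metric.eventually_nhds_iff_ball.1 hne'
    have hevball : ∀ᶠ z in 𝓝 z₀, z ∈ u ∧ h z ∈ Metric.ball (h z₀) r :=
      (hu.eventually_mem hz₀).and ((hcont z₀ hz₀).preimage_mem_nhds
        (Metric.ball_mem_nhds _ hr))
    obtain ⟨ε, hε0, hε⟩ := Metric.nhds_basis_closedBall.eventually_iff.1 hevball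
    lift ε to NNReal using hε0.le
    have hε0' : (0 : NNReal) < ε := by exact_mod_cast hε0
    have hcontOn : ContinuousOn h (Metric.closedBall z₀ ε) := fun z hz =>
      (hcont z (hε hz).1).continuousWithinAt
    have hd : ∀ z ∈ Metric.ball z₀ (ε : ℝ) \ {z₀}, DifferentiableAt ℂ h z := by
      rintro z ⟨hz1, hz2⟩
      have hmem := hε (Metric.ball_subset_closedBall hz1)
      refine hdiff z hmem.1 (hball _ hmem.2 fun heq => ?_)
      apply hz2
      have : f (h z) = f (h z₀) := by rw [heq]
      rw [(hh z hmem.1).2, hfw₀] at this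
      simpa using this
    have := Complex.hasFPowerSeriesOnBall_of_differentiable_off_countable
      (Set.countable_singleton z₀) hcontOn hd hε0'
    exact this.analyticAt.differentiableAt.differentiableWithinAt

/-- Existence of a holomorphic family of Riemann maps implies the
motion is trivial. -/
theorem trivialMotion_of_holomorphicFamily
    (U : ℂ → Set ℂ) (c : ℂ → ℂ) (φ : ℂ → ℂ → ℂ)
    (hsetup : StandingSetup U c φ)
    (g : ℂ → ℂ → ℂ) (hg : IsHolomorphicFamilyOfRiemannMaps U c g) :
    IsTrivialMotion U c φ := by
  obtain ⟨hpt, hc, hmotion, hbd⟩ := hsetup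
  obtain ⟨hgR, hgH⟩ := hg
  have h0 : (0 : ℂ) ∈ unitDisk := by simp [unitDisk]
  obtain ⟨hg0diff, hg0bij, hg0c⟩ := hgR 0 h0
  have hU0open : IsOpen (U 0) := (hpt 0 h0).2.2.1
  have hDopen : IsOpen unitDisk := Metric.isOpen_ball
  set h : ℂ → ℂ := Function.invFunOn (g 0) unitDisk with hhdef
  have hinv : ∀ z ∈ U 0, h z ∈ unitDisk ∧ g 0 (h z) = z := by
    intro z hz
    obtain ⟨w, hw, hfw⟩ := hg0bij.surjOn hz
    exact ⟨Function.invFunOn_mem ⟨w, hw, hfw⟩, Function.invFunOn_eq ⟨w, hw, hfw⟩⟩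
  have hhd : DifferentiableOn ℂ h (U 0) :=
    invOn_differentiableOn_aux hDopen hU0open hg0diff hg0bij.injOn hinv
  set Φ : ℂ → ℂ → ℂ := fun t z => if z ∈ U 0 then g t (h z) else φ t z with hΦdef
  -- basic facts
  have hfr0 : ∀ z ∈ frontier (U 0), z ∉ U 0 := by
    intro z hz
    rw [hU0open.frontier_eq] at hz
    exact hz.2
  have hclos : ∀ z ∈ closure (U 0), z ∉ U 0 → z ∈ frontier (U 0) := by
    intro z hz hz'
    rw [hU0open.frontier_eq]
    exact ⟨hz, hz'⟩
  have hmapsU : ∀ t ∈ unitDisk, ∀ z ∈ U 0, Φ t z ∈ U t := by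
    intro t ht z hz
    simp only [hΦdef, if_pos hz]
    exact (hgR t ht).2.1.mapsTo (hinv z hz).1
  have hmapsF : ∀ t ∈ unitDisk, ∀ z ∈ frontier (U 0), Φ t z ∈ frontier (U t) := by
    intro t ht z hz
    simp only [hΦdef, if_neg (hfr0 z hz)]
    rw [← hbd t ht]
    exact Set.mem_image_of_mem _ hz
  have hUtfr : ∀ t ∈ unitDisk, ∀ w ∈ frontier (U t), w ∉ U t := by
    intro t ht w hw
    rw [((hpt t ht).2.2.1).frontier_eq] at hw
    exact hw.2
  have hinjΦ : ∀ t ∈ unitDisk, Set.InjOn (Φ t) (closure (U 0)) := by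
    intro t ht z₁ hz₁ z₂ hz₂ heq
    by_cases h1 : z₁ ∈ U 0 <;> by_cases h2 : z₂ ∈ U 0
    · simp only [hΦdef, if_pos h1, if_pos h2] at heq
      have := (hgR t ht).2.1.injOn (hinv z₁ h1).1 (hinv z₂ h2).1 heq
      rw [← (hinv z₁ h1).2, ← (hinv z₂ h2).2, this]
    · exact absurd (heq ▸ hmapsU t ht z₁ h1)
        (hUtfr t ht _ (hmapsF t ht z₂ (hclos z₂ hz₂ h2)))
    · exact absurd (heq ▸ hmapsU t ht z₂ h2)
        (hUtfr t ht _ (hmapsF t ht z₁ (hclos z₁ hz₁ h1)))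
    · simp only [hΦdef, if_neg h1, if_neg h2] at heq
      exact hmotion.1 t ht (hclos z₁ hz₁ h1) (hclos z₂ hz₂ h2) heq
  refine ⟨Φ, ⟨hinjΦ, ?_, ?_⟩, ?_, ?_⟩
  · -- holomorphic in t
    intro z hz
    by_cases hzU : z ∈ U 0
    · simp only [hΦdef, if_pos hzU]
      exact hgH (h z) (hinv z hzU).1
    · simp only [hΦdef, if_neg hzU]
      exact hmotion.2.1 z (hclos z hz hzU)
  · -- identity at 0
    intro z hz
    by_cases hzU : z ∈ U 0
    · simp only [hΦdef, if_pos hzU]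
      exact (hinv z hzU).2
    · simp only [hΦdef, if_neg hzU]
      exact hmotion.2.2 z (hclos z hz hzU)
  · -- agrees with φ on the frontier
    intro t ht z hz
    simp only [hΦdef, if_neg (hfr0 z hz)]
  · -- biholomorphism on U 0
    intro t ht
    obtain ⟨hgtdiff, hgtbij, hgtc⟩ := hgR t ht
    refine ⟨?_, ⟨fun z hz => hmapsU t ht z hz, ?_, ?_⟩, ?_⟩
    · refine DifferentiableOn.congr (f := fun z => g t (h z)) ?_
        (fun z hz => by simp only [hΦdef, if_pos hz])
      exact hgtdiff.comp hhd fun z hz => (hinv z hz).1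
    · intro z₁ hz₁ z₂ hz₂ heq
      simp only [hΦdef, if_pos hz₁, if_pos hz₂] at heq
      have := hgtbij.injOn (hinv z₁ hz₁).1 (hinv z₂ hz₂).1 heq
      rw [← (hinv z₁ hz₁).2, ← (hinv z₂ hz₂).2, this]
    · intro z' hz'
      obtain ⟨w, hw, hfw⟩ := hgtbij.surjOn hz'
      have hzU : g 0 w ∈ U 0 := hg0bij.mapsTo hw
      refine ⟨g 0 w, hzU, ?_⟩
      have hhw : h (g 0 w) = w :=
        hg0bij.injOn (hinv _ hzU).1 hw (hinv _ hzU).2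
      simp only [hΦdef, if_pos hzU, hhw, hfw]
    · have hc0 : c 0 ∈ U 0 := (hpt 0 h0).2.2.2.2
      have hh0 : h (c 0) = 0 := by
        apply hg0bij.injOn (hinv _ hc0).1 h0
        rw [(hinv _ hc0).2, hg0c]
      simp only [hΦdef, if_pos hc0, hh0, hgtc]


end
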